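/- Let R be a commutative ring with unity. If every finitely generated commutative R-algebra A which is a field is finitely generated as an R-module, then R is a Jacobson ring. -/

import Mathlib

universe u

/-- Let `R` be a commutative ring. If every finitely generated commutative `R`-algebra `A`
which is a field is finitely generated as an `R`-module, then `R` is a Jacobson ring. -/
theorem isJacobsonRing_of_finiteType_field_finite
    (R : Type u) [CommRing R]
    (h : ∀ (A : Type u) [CommRing A] [Algebra R A],
      Algebra.FiniteType R A → IsField A → Module.Finite R A) :
    IsJacobsonRing R := by
  rw [isJacobsonRing_iff_prime_eq]
  intro P hP
  refine le_antisymm ?_ Ideal.le_jacobson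
  by_contra hc
  rw [SetLike.not_le_iff_exists] at hc
  obtain ⟨f, hfJ, hfP⟩ := hc
  -- work in the domain D = R / P
  set D := R ⧸ P with hD
  set f' : D := Ideal.Quotient.mk P f with hf'
  have hf0 : f' ≠ 0 := fun hf0 => hfP (Ideal.Quotient.eq_zero_iff_mem.mp hf0)
  -- the localization away from f'
  set L := Localization.Away f' with hL
  have hinj : Function.Injective (algebraMap D L) :=
    IsLocalization.injective L (powers_le_nonZeroDivisors_of_noZeroDivisors hf0)
  have : Nontrivial L := hinj.nontrivial
  obtain ⟨m, hm⟩ := Ideal.exists_maximal L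
  set K := L ⧸ m with hK
  letI : Field K := Ideal.Quotient.field m
  -- finite type
  haveI ftRD : Algebra.FiniteType R D :=
    Algebra.FiniteType.of_surjective (Ideal.Quotient.mkₐ R P)
      Ideal.Quotient.mk_surjective
  haveI ftDL : Algebra.FiniteType D L :=
    IsLocalization.finiteType_of_monoid_fg (Submonoid.powers f') L
  haveI ftRL : Algebra.FiniteType R L := Algebra.FiniteType.trans ftRD ftDL
  haveI ftRK : Algebra.FiniteType R K :=
    Algebra.FiniteType.of_surjective (Ideal.Quotient.mkₐ R m)
      Ideal.Quotient.mk_surjective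
  -- K is a field, finitely generated as R-algebra, hence finite as R-module
  haveI hfin : Module.Finite R K := h K ftRK (Field.toIsField K)
  haveI : Algebra.IsIntegral R K := Algebra.IsIntegral.of_finite R K
  haveI : Algebra.IsIntegral D K :=
    ⟨fun x => (Algebra.IsIntegral.isIntegral (R := R) x).tower_top⟩
  -- the contraction of the zero ideal of K to D is maximal
  set q : Ideal D := Ideal.comap (algebraMap D K) ⊥ with hq
  haveI hbotm : (⊥ : Ideal K).IsMaximal := Ideal.bot_isMaximal
  haveI hqm : q.IsMaximal := Ideal.isMaximal_comap_of_isIntegral_of_isMaximal (⊥ : Ideal K)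
  -- f' is not in q since its image in L is a unit
  have hfq : f' ∉ q := by
    intro hmem
    have hu : IsUnit (algebraMap D L f') :=
      IsLocalization.map_units L (⟨f', Submonoid.mem_powers f'⟩ : Submonoid.powers f')
    have hu' : IsUnit (algebraMap D K f') := by
      have : algebraMap D K f' = algebraMap L K (algebraMap D L f') :=
        (IsScalarTower.algebraMap_apply D L K f')
      rw [this]
      exact hu.map (algebraMap L K)
    have h0 : algebraMap D K f' = 0 := Ideal.mem_bot.mp (Ideal.mem_comap.mp hmem)
    rw [h0] at hu'
    exact hu'.ne_zero rfl
  -- but f ∈ P.jacobson forces f' ∈ q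
  have hPJ : P ≤ Ideal.comap (Ideal.Quotient.mk P) q := by
    intro x hx
    simp only [Ideal.mem_comap]
    rw [Ideal.Quotient.eq_zero_iff_mem.mpr hx]
    exact q.zero_mem
  haveI hJm : (Ideal.comap (Ideal.Quotient.mk P) q).IsMaximal :=
    Ideal.comap_isMaximal_of_surjective _ Ideal.Quotient.mk_surjective
  have : f ∈ Ideal.comap (Ideal.Quotient.mk P) q :=
    (sInf_le (show _ ∈ {J : Ideal R | P ≤ J ∧ J.IsMaximal} from ⟨hPJ, hJm⟩)) hfJ
  exact hfq this
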